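/- Let Y be a subset of a generalized topological space X. Then Y is topologically compact in X (every cover of Y by weakly open sets has a finite subcover) if and only if Y is absolutely compact in X (every cover of Y by open sets of X has a finite subcover). Moreover, if Y is absolutely compact in X, then Y is admissibly compact in X (every admissible open family covering Y has a finite subfamily covering Y). -/
import Mathlib


open Set TopologicalSpace Topology

universe u

/-- A generalized topology in the sense of Delfs–Knebusch (axioms following
Piękosz, Definition 2.2.1): `Cov` is the collection of admissible open families,
and the open sets are the members of `⋃₀ Cov`. -/
structure GenTop (X : Type u) : Type u where
  Cov : Set (Set (Set X))
  univ_open : Set.univ ∈ ⋃₀ Cov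
  finite_admissible : ∀ 𝒰 : Set (Set X), 𝒰.Finite → 𝒰 ⊆ ⋃₀ Cov → 𝒰 ∈ Cov
  union_open : ∀ 𝒰 ∈ Cov, ⋃₀ 𝒰 ∈ ⋃₀ Cov
  restrict : ∀ 𝒰 ∈ Cov, ∀ V ∈ ⋃₀ Cov, (fun U => V ∩ U) '' 𝒰 ∈ Cov
  transitive : ∀ 𝒰 ∈ Cov, ∀ f : Set X → Set (Set X),
    (∀ U ∈ 𝒰, f U ∈ Cov ∧ ⋃₀ f U = U) → {V : Set X | ∃ U ∈ 𝒰, V ∈ f U} ∈ Cov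
  coarsen : ∀ 𝒰 ∈ Cov, ∀ 𝒱 ⊆ ⋃₀ Cov, (∀ U ∈ 𝒰, ∃ V ∈ 𝒱, U ⊆ V) →
    ⋃₀ 𝒱 = ⋃₀ 𝒰 → 𝒱 ∈ Cov
  regular : ∀ 𝒰 ∈ Cov, ∀ W ⊆ ⋃₀ 𝒰, (∀ U ∈ 𝒰, W ∩ U ∈ ⋃₀ Cov) → W ∈ ⋃₀ Cov

namespace GenTop

variable {X : Type u} (G : GenTop X)

/-- The open sets of a gts. -/
def Opens : Set (Set X) := ⋃₀ G.Cov

/-- The closed sets of a gts. -/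
def Closeds : Set (Set X) := {A : Set X | Aᶜ ∈ G.Opens}

/-- The topologization of a gts: the topology generated by the open sets. -/
def topol : TopologicalSpace X := TopologicalSpace.generateFrom G.Opens

/-- A gts is weakly normal if disjoint sets, each a singleton or closed,
can be separated by disjoint open sets. -/
def WeaklyNormal : Prop :=
  ∀ A₁ A₂ : Set X, ((∃ x, A₁ = {x}) ∨ A₁ ∈ G.Closeds) →
    ((∃ x, A₂ = {x}) ∨ A₂ ∈ G.Closeds) → Disjoint A₁ A₂ →
    ∃ W₁ ∈ G.Opens, ∃ W₂ ∈ G.Opens, Disjoint W₁ W₂ ∧ A₁ ⊆ W₁ ∧ A₂ ⊆ W₂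

end GenTop

namespace GenTop

variable {X : Type u} (G : GenTop X)

/-- `Y` is topologically compact in the gts `X`: every cover of `Y` by weakly
open sets has a finite subcover. -/
def TopCompactIn (Y : Set X) : Prop :=
  ∀ 𝒱 : Set (Set X), (∀ V ∈ 𝒱, IsOpen[G.topol] V) → Y ⊆ ⋃₀ 𝒱 →
    ∃ 𝒰 ⊆ 𝒱, 𝒰.Finite ∧ Y ⊆ ⋃₀ 𝒰

/-- `Y` is absolutely compact in the gts `X`: every cover of `Y` by open sets
has a finite subcover. -/
def AbsCompactIn (Y : Set X) : Prop :=
  ∀ 𝒱 ⊆ G.Opens, Y ⊆ ⋃₀ 𝒱 → ∃ 𝒰 ⊆ 𝒱, 𝒰.Finite ∧ Y ⊆ ⋃₀ 𝒰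

/-- `Y` is admissibly compact in the gts `X`: every admissible open family
covering `Y` has a finite subfamily covering `Y`. -/
def AdmCompactIn (Y : Set X) : Prop :=
  ∀ 𝒱 ∈ G.Cov, Y ⊆ ⋃₀ 𝒱 → ∃ 𝒰 ⊆ 𝒱, 𝒰.Finite ∧ Y ⊆ ⋃₀ 𝒰

end GenTop


lemma GenTop.inter_open {X : Type u} (G : GenTop X) {U V : Set X}
    (hU : U ∈ G.Opens) (hV : V ∈ G.Opens) : U ∩ V ∈ G.Opens := by
  have hUs : ({U} : Set (Set X)) ∈ G.Cov := by
    apply G.finite_admissible _ (Set.finite_singleton U)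
    intro W hW; rcases hW with rfl; exact hU
  have h := G.restrict {U} hUs V hV
  rw [Set.inter_comm]
  exact ⟨_, h, ⟨U, rfl, rfl⟩⟩

lemma GenTop.basis {X : Type u} (G : GenTop X) {V : Set X}
    (hV : IsOpen[G.topol] V) : ∀ y ∈ V, ∃ W ∈ G.Opens, y ∈ W ∧ W ⊆ V := by
  have hV' : TopologicalSpace.GenerateOpen G.Opens V := hV
  clear hV
  induction hV' with
  | basic U hU => exact fun y hy => ⟨U, hU, hy, le_refl U⟩
  | univ => exact fun y _ => ⟨Set.univ, G.univ_open, trivial, le_refl _⟩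
  | inter U₁ U₂ _ _ ih₁ ih₂ =>
      intro y hy
      obtain ⟨W₁, hW₁, hyW₁, hW₁s⟩ := ih₁ y hy.1
      obtain ⟨W₂, hW₂, hyW₂, hW₂s⟩ := ih₂ y hy.2
      exact ⟨W₁ ∩ W₂, G.inter_open hW₁ hW₂, ⟨hyW₁, hyW₂⟩,
        Set.inter_subset_inter hW₁s hW₂s⟩
  | sUnion S _ ih =>
      intro y hy
      obtain ⟨U, hU, hyU⟩ := hy
      obtain ⟨W, hW, hyW, hWs⟩ := ih U hU y hyU
      exact ⟨W, hW, hyW, hWs.trans (Set.subset_sUnion_of_mem hU)⟩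

/-- Topological and absolute compactness of a subset of a gts are equivalent,
and absolute compactness implies admissible compactness. -/
theorem stmt_6 {X : Type u} (G : GenTop X) (Y : Set X) :
    (G.TopCompactIn Y ↔ G.AbsCompactIn Y) ∧
    (G.AbsCompactIn Y → G.AdmCompactIn Y) := by
  constructor
  · constructor
    · intro h 𝒱 h𝒱 hY
      exact h 𝒱 (fun V hV => TopologicalSpace.GenerateOpen.basic V (h𝒱 hV)) hY
    · intro h 𝒱 h𝒱 hY
      set 𝒲 : Set (Set X) := {W | W ∈ G.Opens ∧ ∃ V ∈ 𝒱, W ⊆ V} with h𝒲def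
      have hcov : Y ⊆ ⋃₀ 𝒲 := by
        intro y hy
        obtain ⟨V, hV, hyV⟩ := hY hy
        obtain ⟨W, hW, hyW, hWV⟩ := G.basis (h𝒱 V hV) y hyV
        exact ⟨W, ⟨hW, V, hV, hWV⟩, hyW⟩
      obtain ⟨𝒰, h𝒰𝒲, h𝒰fin, h𝒰cov⟩ := h 𝒲 (fun W hW => hW.1) hcov
      choose! f hf hfs using fun W (hW : W ∈ 𝒲) => hW.2
      refine ⟨f '' 𝒰, ?_, h𝒰fin.image f, ?_⟩
      · rintro V ⟨W, hW, rfl⟩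
        exact hf W (h𝒰𝒲 hW)
      · intro y hy
        obtain ⟨W, hW, hyW⟩ := h𝒰cov hy
        exact ⟨f W, ⟨W, hW, rfl⟩, hfs W (h𝒰𝒲 hW) hyW⟩
  · intro h 𝒱 h𝒱 hY
    exact h 𝒱 (fun V hV => ⟨𝒱, h𝒱, hV⟩) hY
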